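/- Let n ≥ 2, m ≥ 2, l ∈ {0,…,n−1}, and let H = {i ∈ {0,…,n−1}^m : i_{m−1} = l}; identify the coordinates of P_H(v) with {0,…,n−1}^{m−1} via i' ↦ (i'|l). Then P_H(C_n(r,m)) = C_n(r,m−1) whenever 0 ≤ r ≤ m−1, and P_H(D_n(r,m)) = D_n(r−1,m−1) whenever 1 ≤ r ≤ m. -/

import Mathlib

open Finset

/-- The `l`-th subvector in the concatenation decomposition:
`(subvec v l) i' = v (i'|l)`. -/
def subvec {n m : ℕ} (v : (Fin (m + 1) → Fin n) → ZMod 2) (l : Fin n) :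
    (Fin m → Fin n) → ZMod 2 :=
  fun i' => v (Fin.snoc i' l)

/-- The Berman code `D_n(r,m)`, defined recursively. -/
def BermanD (n : ℕ) : (m : ℕ) → ℕ → Set ((Fin m → Fin n) → ZMod 2)
  | 0, _ => {0}
  | m + 1, r =>
    if r = 0 then {v | ∑ i, v i = 0}
    else if m + 1 ≤ r then {0}
    else {v | (∀ l : Fin n, subvec v l ∈ BermanD n m (r - 1)) ∧
              (fun i' => ∑ l : Fin n, subvec v l i') ∈ BermanD n m r}

/-- The dual Berman code `C_n(r,m)`, defined recursively. -/
def BermanC (n : ℕ) : (m : ℕ) → ℕ → Set ((Fin m → Fin n) → ZMod 2)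
  | 0, _ => Set.univ
  | m + 1, r =>
    if r = 0 then {v | ∃ c : ZMod 2, ∀ i, v i = c}
    else if m + 1 ≤ r then Set.univ
    else {v | ∃ (u : (Fin m → Fin n) → ZMod 2) (w : Fin n → (Fin m → Fin n) → ZMod 2),
            u ∈ BermanC n m r ∧
            (∀ l : Fin n, (l : ℕ) < n - 1 → w l ∈ BermanC n m (r - 1)) ∧
            (∀ l : Fin n, (l : ℕ) = n - 1 → w l = 0) ∧
            (∀ l : Fin n, subvec v l = u + w l)}

/-- Hamming weight of a binary vector. -/
def hwt {n m : ℕ} (v : (Fin m → Fin n) → ZMod 2) : ℕ :=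
  (Finset.univ.filter fun i => v i ≠ 0).card

/-- `preceq j i` means `j ⪯ i`: for every position `k`, either `j k = 0` or `j k = i k`. -/
def preceq {n m : ℕ} (j i : Fin m → Fin n) : Prop :=
  ∀ k, (j k : ℕ) = 0 ∨ j k = i k

instance {n m : ℕ} (j i : Fin m → Fin n) : Decidable (preceq j i) :=
  inferInstanceAs (Decidable (∀ k, (j k : ℕ) = 0 ∨ j k = i k))

/-- Hamming weight of an index tuple. -/
def wtTuple {n m : ℕ} (i : Fin m → Fin n) : ℕ :=
  (Finset.univ.filter fun k => (i k : ℕ) ≠ 0).card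

/-- The vector `c_m(i')`: the indicator of `{i : i ⪯ i'}`. -/
def cVec {n : ℕ} (m : ℕ) (i' : Fin m → Fin n) : (Fin m → Fin n) → ZMod 2 :=
  fun i => if preceq i i' then 1 else 0

/-- The vector `d_m(i')`: the indicator of `{i : i' ⪯ i}`. -/
def dVec {n : ℕ} (m : ℕ) (i' : Fin m → Fin n) : (Fin m → Fin n) → ZMod 2 :=
  fun i => if preceq i' i then 1 else 0

/-- The matrix `A_m = A_1^{⊗m}`: its entry in row `i` and column `j` is `1` iff `j ⪯ i`. -/
def Amat (n m : ℕ) : Matrix (Fin m → Fin n) (Fin m → Fin n) (ZMod 2) :=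
  fun i j => if preceq j i then 1 else 0

lemma BermanD_succ (n m r : ℕ) (h0 : r ≠ 0) (h1 : ¬ (m + 1 ≤ r)) :
    BermanD n (m+1) r = {v | (∀ l : Fin n, subvec v l ∈ BermanD n m (r - 1)) ∧
              (fun i' => ∑ l : Fin n, subvec v l i') ∈ BermanD n m r} := by
  conv_lhs => rw [BermanD]
  rw [if_neg h0, if_neg h1]

lemma BermanC_succ (n m r : ℕ) (h0 : r ≠ 0) (h1 : ¬ (m + 1 ≤ r)) :
    BermanC n (m+1) r = {v | ∃ (u : (Fin m → Fin n) → ZMod 2) (w : Fin n → (Fin m → Fin n) → ZMod 2),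
            u ∈ BermanC n m r ∧
            (∀ l : Fin n, (l : ℕ) < n - 1 → w l ∈ BermanC n m (r - 1)) ∧
            (∀ l : Fin n, (l : ℕ) = n - 1 → w l = 0) ∧
            (∀ l : Fin n, subvec v l = u + w l)} := by
  conv_lhs => rw [BermanC]
  rw [if_neg h0, if_neg h1]

lemma BermanC_zero (n m : ℕ) :
    BermanC n (m+1) 0 = {v | ∃ c : ZMod 2, ∀ i, v i = c} := by
  conv_lhs => rw [BermanC]
  rw [if_pos rfl]

lemma BermanD_zero (n m : ℕ) :
    BermanD n (m+1) 0 = {v | ∑ i, v i = 0} := by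
  conv_lhs => rw [BermanD]
  rw [if_pos rfl]

lemma BermanD_top (n m r : ℕ) (h0 : r ≠ 0) (h1 : m + 1 ≤ r) :
    BermanD n (m+1) r = {0} := by
  conv_lhs => rw [BermanD]
  rw [if_neg h0, if_pos h1]

lemma subvec_add {n m : ℕ} (v w : (Fin (m+1) → Fin n) → ZMod 2) (l : Fin n) :
    subvec (v + w) l = subvec v l + subvec w l := rfl

lemma zero_mem_D (n m r : ℕ) : (0 : (Fin m → Fin n) → ZMod 2) ∈ BermanD n m r := by
  induction m generalizing r with
  | zero => rw [BermanD]; rfl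
  | succ m ih =>
    by_cases h0 : r = 0
    · subst h0; rw [BermanD_zero]; simp
    · by_cases h1 : m + 1 ≤ r
      · rw [BermanD_top n m r h0 h1]; rfl
      · rw [BermanD_succ n m r h0 h1]
        refine ⟨fun l => ih _, ?_⟩
        have : (fun i' => ∑ l : Fin n, subvec (0 : (Fin (m+1) → Fin n) → ZMod 2) l i')
            = (0 : (Fin m → Fin n) → ZMod 2) := by
          funext i'; simp [subvec]
        rw [this]; exact ih r

lemma const_mem_C (n m r : ℕ) (c : ZMod 2) :
    (fun _ => c : (Fin m → Fin n) → ZMod 2) ∈ BermanC n m r := by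
  induction m generalizing r c with
  | zero => rw [BermanC]; trivial
  | succ m ih =>
    by_cases h0 : r = 0
    · subst h0; rw [BermanC_zero]; exact ⟨c, fun _ => rfl⟩
    · by_cases h1 : m + 1 ≤ r
      · rw [BermanC]; rw [if_neg h0, if_pos h1]; trivial
      · rw [BermanC_succ n m r h0 h1]
        refine ⟨fun _ => c, 0, ih r c, fun l _ => ih (r-1) 0, fun _ _ => rfl, fun l => ?_⟩
        funext i'; simp [subvec]

lemma zero_mem_C (n m r : ℕ) : (0 : (Fin m → Fin n) → ZMod 2) ∈ BermanC n m r :=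
  const_mem_C n m r 0

lemma add_mem_C (n m r : ℕ) {a b : (Fin m → Fin n) → ZMod 2}
    (ha : a ∈ BermanC n m r) (hb : b ∈ BermanC n m r) : a + b ∈ BermanC n m r := by
  induction m generalizing r with
  | zero => rw [BermanC]; trivial
  | succ m ih =>
    by_cases h0 : r = 0
    · subst h0
      rw [BermanC_zero] at *
      obtain ⟨c, hc⟩ := ha; obtain ⟨d, hd⟩ := hb
      exact ⟨c + d, fun i => by simp [hc i, hd i]⟩
    · by_cases h1 : m + 1 ≤ r
      · rw [BermanC]; rw [if_neg h0, if_pos h1]; trivial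
      · rw [BermanC_succ n m r h0 h1] at *
        obtain ⟨u, w, hu, hw, hw0, hs⟩ := ha
        obtain ⟨u', w', hu', hw', hw0', hs'⟩ := hb
        refine ⟨u + u', w + w', ih r hu hu', fun l hl => ih (r-1) (hw l hl) (hw' l hl),
          fun l hl => by simp [Pi.add_apply, hw0 l hl, hw0' l hl],
          fun l => ?_⟩
        rw [subvec_add, hs l, hs' l]
        funext i'; simp only [Pi.add_apply]; ring

lemma mono_C (n m r : ℕ) : BermanC n m r ⊆ BermanC n m (r+1) := by
  induction m generalizing r with
  | zero => rw [BermanC, BermanC]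
  | succ m ih =>
    intro v hv
    by_cases h1 : m + 1 ≤ r + 1
    · rw [BermanC]; rw [if_neg (Nat.succ_ne_zero r), if_pos h1]; trivial
    · rw [BermanC_succ n m (r+1) (Nat.succ_ne_zero r) h1]
      by_cases h0 : r = 0
      · subst h0
        rw [BermanC_zero] at hv
        obtain ⟨c, hc⟩ := hv
        refine ⟨fun _ => c, 0, const_mem_C n m 1 c, fun l _ => zero_mem_C n m 0,
          fun _ _ => rfl, fun l => ?_⟩
        funext i'; simp [subvec, hc]
      · have hr1 : ¬ m + 1 ≤ r := by omega
        rw [BermanC_succ n m r h0 hr1] at hv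
        obtain ⟨u, w, hu, hw, hw0, hs⟩ := hv
        refine ⟨u, w, ih r hu, fun l hl => ?_, hw0, hs⟩
        have h2 : r - 1 + 1 = r := by omega
        have := ih (r-1) (hw l hl)
        rw [h2] at this
        simpa using this

/-- puncturing to the coordinates with last index component equal to `l`
sends `C_n(r,m+1)` to `C_n(r,m)` (for `r ≤ m`) and `D_n(r,m+1)` to `D_n(r−1,m)`
(for `1 ≤ r ≤ m+1`).  (Here the length-`n^{m+1}` code plays the role of the code of
length `n^m`, `m ≥ 2`, in the paper.) -/
theorem berman_puncture_last (n m r : ℕ) (hn : 2 ≤ n) (hm : 1 ≤ m) (l : Fin n) :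
    (r ≤ m →
      (fun v : (Fin (m + 1) → Fin n) → ZMod 2 => subvec v l) '' BermanC n (m + 1) r =
        BermanC n m r) ∧
    (1 ≤ r → r ≤ m + 1 →
      (fun v : (Fin (m + 1) → Fin n) → ZMod 2 => subvec v l) '' BermanD n (m + 1) r =
        BermanD n m (r - 1)) := by
  obtain ⟨k, rfl⟩ : ∃ k, m = k + 1 := ⟨m - 1, by omega⟩
  constructor
  · -- C part
    intro hr
    ext w
    simp only [Set.mem_image]
    constructor
    · rintro ⟨v, hv, rfl⟩
      by_cases h0 : r = 0
      · subst h0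
        rw [BermanC_zero] at hv ⊢
        obtain ⟨c, hc⟩ := hv
        exact ⟨c, fun i => hc _⟩
      · have h1 : ¬ k + 1 + 1 ≤ r := by omega
        rw [BermanC_succ n (k+1) r h0 h1] at hv
        obtain ⟨u, w', hu, hw, hw0, hs⟩ := hv
        rw [hs l]
        rcases lt_or_ge (l : ℕ) (n - 1) with hl | hl
        · have hr1 : r - 1 + 1 = r := by omega
          have h2 := mono_C n (k+1) (r-1) (hw l hl)
          rw [hr1] at h2
          exact add_mem_C n (k+1) r hu h2
        · have hle : (l : ℕ) = n - 1 := by omega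
          rw [hw0 l hle]
          simpa using hu
    · intro hw
      refine ⟨fun i => w (Fin.init i), ?_, ?_⟩
      · by_cases h0 : r = 0
        · subst h0
          rw [BermanC_zero] at hw ⊢
          obtain ⟨c, hc⟩ := hw
          exact ⟨c, fun i => hc _⟩
        · have h1 : ¬ k + 1 + 1 ≤ r := by omega
          rw [BermanC_succ n (k+1) r h0 h1]
          refine ⟨w, 0, hw, fun l' _ => zero_mem_C n (k+1) (r-1), fun _ _ => rfl, fun l' => ?_⟩
          funext i'; simp [subvec, Fin.init_snoc]
      · funext i'; simp [subvec, Fin.init_snoc]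
  · -- D part
    intro hr1 hr2
    rcases eq_or_lt_of_le hr2 with heq | hlt
    · -- r = k + 2
      have h0 : r ≠ 0 := by omega
      rw [BermanD_top n (k+1) r h0 (by omega),
          BermanD_top n k (r-1) (by omega) (by omega)]
      rw [Set.image_singleton]
      congr 1
    · have hr : r ≤ k + 1 := by omega
      have h0 : r ≠ 0 := by omega
      have h1 : ¬ k + 1 + 1 ≤ r := by omega
      ext w
      simp only [Set.mem_image]
      constructor
      · rintro ⟨v, hv, rfl⟩
        rw [BermanD_succ n (k+1) r h0 h1] at hv
        exact hv.1 l
      · intro hw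
        obtain ⟨l0, hl0⟩ : ∃ l0 : Fin n, l0 ≠ l :=
          Fintype.exists_ne_of_one_lt_card (by rw [Fintype.card_fin]; omega) l
        set v : (Fin (k+1+1) → Fin n) → ZMod 2 :=
          fun i => if i (Fin.last _) = l ∨ i (Fin.last _) = l0 then w (Fin.init i) else 0 with hv
        have hsub : ∀ l' : Fin n, subvec v l' = if l' = l ∨ l' = l0 then w else 0 := by
          intro l'
          by_cases h : l' = l ∨ l' = l0 <;>
            · funext i'
              simp [subvec, hv, Fin.snoc_last, Fin.init_snoc, h]
        refine ⟨v, ?_, ?_⟩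
        · rw [BermanD_succ n (k+1) r h0 h1]
          constructor
          · intro l'
            rw [hsub l']
            split
            · exact hw
            · exact zero_mem_D n (k+1) (r-1)
          · have hsum : (fun i' => ∑ l' : Fin n, subvec v l' i')
                = (0 : (Fin (k+1) → Fin n) → ZMod 2) := by
              funext i'
              have hpt : ∀ l' : Fin n, subvec v l' i'
                  = (if l' = l then w i' else 0) + (if l' = l0 then w i' else 0) := by
                intro l'
                rw [hsub l']
                by_cases h1' : l' = l
                · subst h1'
                  simp [hl0.symm, Ne.symm hl0]
                · by_cases h2' : l' = l0
                  · subst h2'; simp [hl0, h1']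
                  · simp [h1', h2']
              simp only [Pi.zero_apply]
              rw [Finset.sum_congr rfl (fun l' _ => hpt l'), Finset.sum_add_distrib,
                  Finset.sum_ite_eq' Finset.univ l (fun _ => w i'),
                  Finset.sum_ite_eq' Finset.univ l0 (fun _ => w i')]
              simp only [Finset.mem_univ, if_true]
              have : ∀ a : ZMod 2, a + a = 0 := by decide
              exact this _
            rw [hsum]
            exact zero_mem_D n (k+1) r
        · rw [hsub l]; simp
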